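/- Let C_U := ∑_{j=1}^{n} |j⟩⟨j| ⊗ U_j be a controlled unitary on ℂ^n ⊗ ℂ^m, where {|j⟩} is an orthonormal basis of ℂ^n and each U_j is a unitary on ℂ^m, viewed as the bipartite channel ρ ↦ C_U ρ C_Uᴴ with A' = A = ℂ^n and B' = B = ℂ^m. Then the conditional channel min-entropy satisfies S_∞[A|B]_{C_U} ≥ −2 log n; moreover, if the unitaries are mutually orthogonal, i.e., tr(U_iᴴ U_j) = 0 for all i ≠ j, then equality holds: S_∞[A|B]_{C_U} = −2 log n. -/

import Mathlib

open scoped ComplexOrder Kronecker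
open Matrix

noncomputable section

/-- Square complex matrices indexed by `ι`. -/
abbrev Mat (ι : Type) : Type := Matrix ι ι ℂ

/-- A quantum state: a positive semidefinite matrix of trace one. -/
def IsState {ι : Type} [Fintype ι] (ρ : Mat ι) : Prop :=
  ρ.PosSemidef ∧ ρ.trace = 1

/-- Max-relative entropy `D_∞(ρ‖σ) = log₂ inf {λ ≥ 0 : λ•σ − ρ ⪰ 0}` as an extended real;
it is `+∞` (`sInf ∅ = ⊤`) when no such `λ` exists. -/
def Dmax {ι : Type} [Fintype ι] (ρ σ : Mat ι) : EReal :=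
  sInf {x : EReal | ∃ l : ℝ, 0 ≤ l ∧ ((l : ℂ) • σ - ρ).PosSemidef ∧
    x = ((Real.logb 2 l : ℝ) : EReal)}

/-- Partial trace over the first tensor factor. -/
def trFst {ιA ιB : Type} [Fintype ιA] (ρ : Matrix (ιA × ιB) (ιA × ιB) ℂ) : Mat ιB :=
  Matrix.of fun i j => ∑ k : ιA, ρ (k, i) (k, j)

/-- Partial trace over the second tensor factor. -/
def trSnd {ιA ιB : Type} [Fintype ιB] (ρ : Matrix (ιA × ιB) (ιA × ιB) ℂ) : Mat ιA :=
  Matrix.of fun i j => ∑ k : ιB, ρ (i, k) (j, k)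

/-- Conditional min-entropy `S_∞(A|B)_ρ := −inf over states σ on B of D_∞(ρ‖1_A⊗σ)`. -/
def condMin {ιA ιB : Type} [Fintype ιA] [DecidableEq ιA] [Fintype ιB]
    (ρ : Matrix (ιA × ιB) (ιA × ιB) ℂ) : EReal :=
  -(⨅ σ : {σ : Mat ιB // IsState σ}, Dmax ρ ((1 : Mat ιA) ⊗ₖ σ.1))

/-- `S↓_∞(A|B)_ρ := −D_∞(ρ‖1_A⊗ρ_B)` with `ρ_B = tr_A ρ`. -/
def condMinDown {ιA ιB : Type} [Fintype ιA] [DecidableEq ιA] [Fintype ιB]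
    (ρ : Matrix (ιA × ιB) (ιA × ιB) ℂ) : EReal :=
  -(Dmax ρ ((1 : Mat ιA) ⊗ₖ trFst ρ))

/-- The (unnormalized) Choi matrix of a linear map of matrices. -/
def choiMatrix {ι κ : Type} [DecidableEq ι] (L : Mat ι →ₗ[ℂ] Mat κ) :
    Matrix (ι × κ) (ι × κ) ℂ :=
  Matrix.of fun p q => L (Matrix.single p.1 q.1 1) p.2 q.2

/-- A quantum channel: a linear map that is completely positive (positive semidefinite Choi
matrix) and trace preserving. -/
def IsChannel {ι κ : Type} [Fintype ι] [DecidableEq ι] [Fintype κ]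
    (L : Mat ι →ₗ[ℂ] Mat κ) : Prop :=
  (choiMatrix L).PosSemidef ∧ ∀ X : Mat ι, (L X).trace = X.trace

/-- The Choi state `Φ^L = (id⊗L)(Φ_d)` of a linear map of matrices. -/
def choiState {ι κ : Type} [Fintype ι] [DecidableEq ι] (L : Mat ι →ₗ[ℂ] Mat κ) :
    Matrix (ι × κ) (ι × κ) ℂ :=
  ((Fintype.card ι : ℂ))⁻¹ • choiMatrix L

/-- The Choi state of a bipartite channel `N : A'B' → AB`, re-indexed across
the cut `R_A A : R_B B`. -/
def biChoiState {ιA' ιB' κA κB : Type} [Fintype ιA'] [DecidableEq ιA']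
    [Fintype ιB'] [DecidableEq ιB'] (N : Mat (ιA' × ιB') →ₗ[ℂ] Mat (κA × κB)) :
    Matrix ((ιA' × κA) × (ιB' × κB)) ((ιA' × κA) × (ιB' × κB)) ℂ :=
  Matrix.of fun p q =>
    choiState N ((p.1.1, p.2.1), (p.1.2, p.2.2)) ((q.1.1, q.2.1), (q.1.2, q.2.2))

/-- Conditional min-entropy of a bipartite channel:
`S_∞[A|B]_N := −inf over channels Q : B'→B of D_∞(Φ^N ‖ 1_{R_A A} ⊗ Φ^Q) − log₂|A'|`. -/
def chanCondMin {ιA' ιB' κA κB : Type}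
    [Fintype ιA'] [DecidableEq ιA'] [Fintype ιB'] [DecidableEq ιB']
    [Fintype κA] [DecidableEq κA] [Fintype κB] [DecidableEq κB]
    (N : Mat (ιA' × ιB') →ₗ[ℂ] Mat (κA × κB)) : EReal :=
  (-(⨅ Q : {Q : Mat ιB' →ₗ[ℂ] Mat κB // IsChannel Q},
      Dmax (biChoiState N) ((1 : Mat (ιA' × κA)) ⊗ₖ choiState Q.1)))
    - ((Real.logb 2 (Fintype.card ιA' : ℝ) : ℝ) : EReal)

/-- Rank-one projector `|v⟩⟨v|` associated with a vector. -/
def outer {ι : Type} (v : ι → ℂ) : Mat ι := Matrix.vecMulVec v (star v)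

/-- Vectorization `vec(V) := ∑ i, e_i ⊗ V e_i` of a matrix `V : ℂ^ι → ℂ^κ`. -/
def vecRect {ι κ : Type} (V : Matrix κ ι ℂ) : ι × κ → ℂ := fun p => V p.2 p.1

/-- A maximally entangled state on `ι1 × ι2`: `|φ⟩⟨φ|` with
`|φ⟩ = (1/√d) ∑ i, e_i ⊗ f_i` for orthonormal families `e`, `f`, `d = min(|ι1|,|ι2|)`. -/
def IsMaxEntangled {ι1 ι2 : Type} [Fintype ι1] [Fintype ι2]
    (Φ : Matrix (ι1 × ι2) (ι1 × ι2) ℂ) : Prop :=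
  ∃ (e : Fin (min (Fintype.card ι1) (Fintype.card ι2)) → ι1 → ℂ)
    (f : Fin (min (Fintype.card ι1) (Fintype.card ι2)) → ι2 → ℂ),
    (∀ i j, ∑ x : ι1, (starRingEnd ℂ) (e i x) * e j x = if i = j then 1 else 0) ∧
    (∀ i j, ∑ x : ι2, (starRingEnd ℂ) (f i x) * f j x = if i = j then 1 else 0) ∧
    Φ = outer (fun p => (((Real.sqrt (min (Fintype.card ι1) (Fintype.card ι2) : ℝ))⁻¹ : ℝ) : ℂ) *
      ∑ i, e i p.1 * f i p.2)

/-- Partial transpose over the second tensor factor. -/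
def ptransposeSnd {ιA ιB : Type} (ρ : Matrix (ιA × ιB) (ιA × ιB) ℂ) :
    Matrix (ιA × ιB) (ιA × ιB) ℂ :=
  Matrix.of fun p q => ρ (p.1, q.2) (q.1, p.2)

/-- A bipartite state is PPT if its partial transpose is positive semidefinite. -/
def IsPPT {ιA ιB : Type} [Fintype ιA] [Fintype ιB]
    (ρ : Matrix (ιA × ιB) (ιA × ιB) ℂ) : Prop :=
  (ptransposeSnd ρ).PosSemidef

/-- Conjugation channel `X ↦ W X Wᴴ`. -/
def conjMap {ι κ : Type} [Fintype ι] (W : Matrix κ ι ℂ) : Mat ι →ₗ[ℂ] Mat κ where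
  toFun X := W * X * Wᴴ
  map_add' X Y := by simp [Matrix.mul_add, Matrix.add_mul]
  map_smul' c X := by simp [Matrix.mul_smul, Matrix.smul_mul]

/-- The controlled unitary matrix `∑ j, |j⟩⟨j| ⊗ U_j`. -/
def ctrlU {n m : ℕ} (U : Fin n → Mat (Fin m)) : Mat (Fin n × Fin m) :=
  Matrix.of fun p q => (if p.1 = q.1 then 1 else 0) * U p.1 p.2 q.2

/-- The replacer channel `X ↦ tr(X) • γ`. -/
def replacer {ι κ : Type} [Fintype ι] (γ : Mat κ) : Mat ι →ₗ[ℂ] Mat κ where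
  toFun X := X.trace • γ
  map_add' X Y := by simp [Matrix.trace_add, add_smul]
  map_smul' c X := by simp [Matrix.trace_smul, smul_smul]

/-- The maximally mixed state `π_m = 1_m / m`. -/
def uniformState (m : ℕ) : Mat (Fin m) := ((m : ℂ))⁻¹ • (1 : Mat (Fin m))

/-- Tensor product of two linear maps of matrices. -/
def tensorL {ι1 κ1 ι2 κ2 : Type} [Fintype ι1] [DecidableEq ι1]
    (L1 : Mat ι1 →ₗ[ℂ] Mat κ1) (L2 : Mat ι2 →ₗ[ℂ] Mat κ2) :
    Mat (ι1 × ι2) →ₗ[ℂ] Mat (κ1 × κ2) where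
  toFun X := Matrix.of fun p q =>
    ∑ i1 : ι1, ∑ j1 : ι1,
      L1 (Matrix.single i1 j1 1) p.1 q.1 *
        L2 (Matrix.of fun i2 j2 => X (i1, i2) (j1, j2)) p.2 q.2
  map_add' X Y := by
    ext p q
    have h : ∀ i1 j1 : ι1,
        (Matrix.of fun i2 j2 => X (i1, i2) (j1, j2) + Y (i1, i2) (j1, j2)) =
          (Matrix.of fun i2 j2 => X (i1, i2) (j1, j2)) +
            (Matrix.of fun i2 j2 => Y (i1, i2) (j1, j2)) := by
      intro i1 j1; ext i2 j2; simp
    simp only [Matrix.add_apply, Matrix.of_apply, h, map_add, mul_add,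
      Finset.sum_add_distrib]
  map_smul' c X := by
    ext p q
    have h : ∀ i1 j1 : ι1,
        (Matrix.of fun i2 j2 => c * X (i1, i2) (j1, j2)) =
          c • (Matrix.of fun i2 j2 => X (i1, i2) (j1, j2)) := by
      intro i1 j1; ext i2 j2; simp
    simp only [Matrix.smul_apply, smul_eq_mul, Matrix.of_apply, RingHom.id_apply, h,
      LinearMap.map_smul]
    rw [Finset.mul_sum]
    refine Finset.sum_congr rfl fun i1 _ => ?_
    rw [Finset.mul_sum]
    refine Finset.sum_congr rfl fun j1 _ => ?_
    ring


/-- Square root of a positive semidefinite matrix (junk value `0` otherwise). -/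
def matSqrt {ι : Type} [Fintype ι] [DecidableEq ι] (M : Mat ι) : Mat ι :=
  letI := Classical.dec M.PosSemidef
  if h : M.PosSemidef then
    (h.1.eigenvectorUnitary : Mat ι) * diagonal ((↑) ∘ (Real.sqrt ·) ∘ h.1.eigenvalues) *
      (star h.1.eigenvectorUnitary : Mat ι)
  else 0

/-- Trace norm `‖X‖₁ = tr √(XᴴX)`. -/
def traceNorm {ι : Type} [Fintype ι] [DecidableEq ι] (X : Mat ι) : ℝ :=
  (matSqrt (Xᴴ * X)).trace.re

/-- Fidelity `F(ρ,σ) = ‖√ρ√σ‖₁²`. -/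
def fidelity {ι : Type} [Fintype ι] [DecidableEq ι] (ρ σ : Mat ι) : ℝ :=
  (traceNorm (matSqrt ρ * matSqrt σ)) ^ 2

/-- Purified distance `P(ρ,σ) = √(1 − F(ρ,σ))`. -/
def purifiedDist {ι : Type} [Fintype ι] [DecidableEq ι] (ρ σ : Mat ι) : ℝ :=
  Real.sqrt (1 - fidelity ρ σ)

/-- Purified channel distance `P[N,M] = sup over states ψ of P((id⊗N)ψ, (id⊗M)ψ)`. -/
def purifiedChannelDist {ι κ : Type} [Fintype ι] [DecidableEq ι] [Fintype κ] [DecidableEq κ]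
    (L1 L2 : Mat ι →ₗ[ℂ] Mat κ) : ℝ :=
  ⨆ ψ : {ψ : Matrix (ι × ι) (ι × ι) ℂ // IsState ψ},
    purifiedDist (tensorL (LinearMap.id : Mat ι →ₗ[ℂ] Mat ι) L1 ψ.1)
      (tensorL (LinearMap.id : Mat ι →ₗ[ℂ] Mat ι) L2 ψ.1)

/-- Diamond norm `‖L‖◊ = sup over states ρ on R⊗in (R ≃ in) of ‖(id⊗L)ρ‖₁`. -/
def diamondNorm {ι κ : Type} [Fintype ι] [DecidableEq ι] [Fintype κ] [DecidableEq κ]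
    (L : Mat ι →ₗ[ℂ] Mat κ) : ℝ :=
  ⨆ ρ : {ρ : Matrix (ι × ι) (ι × ι) ℂ // IsState ρ},
    traceNorm (tensorL (LinearMap.id : Mat ι →ₗ[ℂ] Mat ι) L ρ.1)

/-- `−log₂ t`, as an extended real which is `+∞` for `t ≤ 0`. -/
def negLogE (t : ℝ) : EReal := if t ≤ 0 then ⊤ else ((-Real.logb 2 t : ℝ) : EReal)

/-- Hypothesis-testing relative entropy
`D_H^ε(ρ‖σ) = −log₂ inf{tr(Λσ) : 0 ≤ Λ ≤ 1, tr(Λρ) ≥ 1−ε}`. -/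
def DH {ι : Type} [Fintype ι] [DecidableEq ι] (ε : ℝ) (ρ σ : Mat ι) : EReal :=
  negLogE (sInf {t : ℝ | ∃ Λ : Mat ι, Λ.PosSemidef ∧ ((1 : Mat ι) - Λ).PosSemidef ∧
    1 - ε ≤ ((Λ * ρ).trace).re ∧ t = ((Λ * σ).trace).re})

/-- Channel hypothesis-testing relative entropy
`D_H^ε[N‖M] = sup over states ψ of D_H^ε((id⊗N)ψ‖(id⊗M)ψ)`. -/
def DHchan {ι κ : Type} [Fintype ι] [DecidableEq ι] [Fintype κ] [DecidableEq κ]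
    (ε : ℝ) (L1 L2 : Mat ι →ₗ[ℂ] Mat κ) : EReal :=
  ⨆ ψ : {ψ : Matrix (ι × ι) (ι × ι) ℂ // IsState ψ},
    DH ε (tensorL (LinearMap.id : Mat ι →ₗ[ℂ] Mat ι) L1 ψ.1)
      (tensorL (LinearMap.id : Mat ι →ₗ[ℂ] Mat ι) L2 ψ.1)

/-- Channel max-relative entropy `D_∞[N‖M] = D_∞(Φ^N‖Φ^M)`. -/
def DmaxChan {ι κ : Type} [Fintype ι] [DecidableEq ι] [Fintype κ]
    (L1 L2 : Mat ι →ₗ[ℂ] Mat κ) : EReal :=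
  Dmax (choiState L1) (choiState L2)

/-- Smoothed channel max-relative entropy
`D_∞^ε[N‖M] = inf{D_∞[Ñ‖M] : Ñ a channel with (1/2)P[N,Ñ] ≤ ε}`. -/
def DmaxChanSmooth {ι κ : Type} [Fintype ι] [DecidableEq ι] [Fintype κ] [DecidableEq κ]
    (ε : ℝ) (L1 L2 : Mat ι →ₗ[ℂ] Mat κ) : EReal :=
  ⨅ Nt : {Nt : Mat ι →ₗ[ℂ] Mat κ //
      IsChannel Nt ∧ 2⁻¹ * purifiedChannelDist L1 Nt ≤ ε},
    DmaxChan Nt.1 L2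

/-- A quantum superchannel: `Θ(N) = post ∘ (id_E ⊗ N) ∘ pre` for channels `pre`, `post`
and a finite-dimensional memory `E`. -/
structure Superchannel (ι1 κ1 ι2 κ2 : Type) [Fintype ι1] [DecidableEq ι1]
    [Fintype κ1] [DecidableEq κ1] [Fintype ι2] [DecidableEq ι2]
    [Fintype κ2] [DecidableEq κ2] where
  e : ℕ
  pre : Mat ι2 →ₗ[ℂ] Mat (Fin e × ι1)
  post : Mat (Fin e × κ1) →ₗ[ℂ] Mat κ2
  pre_channel : IsChannel pre
  post_channel : IsChannel post

/-- Action of a superchannel on a linear map. -/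
def Superchannel.apply {ι1 κ1 ι2 κ2 : Type} [Fintype ι1] [DecidableEq ι1]
    [Fintype κ1] [DecidableEq κ1] [Fintype ι2] [DecidableEq ι2]
    [Fintype κ2] [DecidableEq κ2] (Θ : Superchannel ι1 κ1 ι2 κ2)
    (L : Mat ι1 →ₗ[ℂ] Mat κ1) : Mat ι2 →ₗ[ℂ] Mat κ2 :=
  Θ.post ∘ₗ (tensorL (LinearMap.id : Mat (Fin Θ.e) →ₗ[ℂ] Mat (Fin Θ.e)) L) ∘ₗ Θ.pre


/-- A conditional Gibbs-preserving superchannel (distillation direction): it maps every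
conditionally thermalizing channel `T^β ⊗ Q̃` to a conditionally uniformly mixing channel
`R^π_m ⊗ Q̃'` for some side channel `Q̃'`. -/
def IsCGPSdist {a' b' a b m d' d : ℕ} (γ : Mat (Fin a))
    (Θ : Superchannel (Fin a' × Fin b') (Fin a × Fin b) (Fin m × Fin d') (Fin m × Fin d)) :
    Prop :=
  ∀ Qt : Mat (Fin b') →ₗ[ℂ] Mat (Fin b), IsChannel Qt →
    ∃ Qt' : Mat (Fin d') →ₗ[ℂ] Mat (Fin d), IsChannel Qt' ∧
      Θ.apply (tensorL (replacer γ) Qt) = tensorL (replacer (uniformState m)) Qt'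

/-- A conditional Gibbs-preserving superchannel (formation direction): it maps every
conditionally uniformly mixing channel `R^π_m ⊗ Q̃` to a conditionally thermalizing channel
`T^β ⊗ Q̃'` for some side channel `Q̃'`. -/
def IsCGPScost {a' b' a b m d' d : ℕ} (γ : Mat (Fin a))
    (Θ : Superchannel (Fin m × Fin d') (Fin m × Fin d) (Fin a' × Fin b') (Fin a × Fin b)) :
    Prop :=
  ∀ Qt : Mat (Fin d') →ₗ[ℂ] Mat (Fin d), IsChannel Qt →
    ∃ Qt' : Mat (Fin b') →ₗ[ℂ] Mat (Fin b), IsChannel Qt' ∧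
      Θ.apply (tensorL (replacer (uniformState m)) Qt) = tensorL (replacer γ) Qt'

/-- One-shot conditional athermality distillation yield `Dist^{(1,ε)}(N, T^β)`:
the worst case over side channels `Q` of the largest `log₂ m` such that some conditional
Gibbs-preserving superchannel converts `(N, T^β⊗Q)` into `(id_m⊗Q', R^π_m⊗Q')`
within purified channel distance `ε`. -/
def DistOneShot {a' b' a b : ℕ} (N : Mat (Fin a' × Fin b') →ₗ[ℂ] Mat (Fin a × Fin b))
    (γ : Mat (Fin a)) (ε : ℝ) : EReal :=
  ⨅ Q : {Q : Mat (Fin b') →ₗ[ℂ] Mat (Fin b) // IsChannel Q},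
    sSup {x : EReal | ∃ m d' d : ℕ, ∃ Q' : Mat (Fin d') →ₗ[ℂ] Mat (Fin d),
      ∃ Θ : Superchannel (Fin a' × Fin b') (Fin a × Fin b) (Fin m × Fin d') (Fin m × Fin d),
        IsChannel Q' ∧ IsCGPSdist γ Θ ∧
        Θ.apply (tensorL (replacer γ) Q.1) = tensorL (replacer (uniformState m)) Q' ∧
        purifiedChannelDist
          (tensorL (LinearMap.id : Mat (Fin m) →ₗ[ℂ] Mat (Fin m)) Q') (Θ.apply N) ≤ ε ∧
        x = ((Real.logb 2 (m : ℝ) : ℝ) : EReal)}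

/-- One-shot conditional athermality formation cost `Cost^{(1,ε)}(N, T^β)`:
the best case over side channels `Q` of the least `log₂ m` such that some conditional
Gibbs-preserving superchannel converts `(id_m⊗Q'', R^π_m⊗Q'')` into `(N, T^β⊗Q)`
within purified channel distance `ε`. -/
def CostOneShot {a' b' a b : ℕ} (N : Mat (Fin a' × Fin b') →ₗ[ℂ] Mat (Fin a × Fin b))
    (γ : Mat (Fin a)) (ε : ℝ) : EReal :=
  ⨅ Q : {Q : Mat (Fin b') →ₗ[ℂ] Mat (Fin b) // IsChannel Q},
    sInf {x : EReal | ∃ m d' d : ℕ, ∃ Q'' : Mat (Fin d') →ₗ[ℂ] Mat (Fin d),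
      ∃ Θ : Superchannel (Fin m × Fin d') (Fin m × Fin d) (Fin a' × Fin b') (Fin a × Fin b),
        IsChannel Q'' ∧ IsCGPScost γ Θ ∧
        Θ.apply (tensorL (replacer (uniformState m)) Q'') = tensorL (replacer γ) Q.1 ∧
        purifiedChannelDist N
          (Θ.apply (tensorL (LinearMap.id : Mat (Fin m) →ₗ[ℂ] Mat (Fin m)) Q'')) ≤ ε ∧
        x = ((Real.logb 2 (m : ℝ) : ℝ) : EReal)}


/-- A bipartite channel `N : A'B' → AB` is no-signaling (semicausal) from `A'` to `B`:
`tr_A ∘ N = tr_{A'} ⊗ Q` for some channel `Q : B' → B`. -/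
def NoSignalFstToSnd {ιA' ιB' κA κB : Type} [Fintype ιA'] [DecidableEq ιA']
    [Fintype ιB'] [DecidableEq ιB'] [Fintype κA] [Fintype κB]
    (N : Mat (ιA' × ιB') →ₗ[ℂ] Mat (κA × κB)) : Prop :=
  ∃ Q : Mat ιB' →ₗ[ℂ] Mat κB, IsChannel Q ∧
    ∀ X : Mat (ιA' × ιB'), trFst (N X) = Q (trFst X)

end



namespace CtrlAux
set_option linter.unusedSectionVars false
variable {ι κ : Type} [Fintype ι] [DecidableEq ι] [Fintype κ] [DecidableEq κ]

lemma star_outer (a : ι → ℂ) : (vecMulVec a (star a))ᴴ = vecMulVec a (star a) := by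
  ext i j
  simp [vecMulVec_apply, conjTranspose_apply, mul_comm]

lemma outer_mulVec (a : ι → ℂ) (x : ι → ℂ) :
    vecMulVec a (star a) *ᵥ x = (star a ⬝ᵥ x) • a := by
  ext i
  simp [mulVec, dotProduct, vecMulVec_apply, Finset.mul_sum, mul_comm, mul_left_comm]

lemma dot_outer (a x : ι → ℂ) :
    star x ⬝ᵥ (vecMulVec a (star a) *ᵥ x) = star (star a ⬝ᵥ x) * (star a ⬝ᵥ x) := by
  rw [outer_mulVec, dotProduct_smul]
  have : star x ⬝ᵥ a = star (star a ⬝ᵥ x) := by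
    simp [dotProduct, Finset.sum_comm, mul_comm]
  simp [this, smul_eq_mul, mul_comm]

lemma posSemidef_outer (a : ι → ℂ) : (vecMulVec a (star a)).PosSemidef := by
  refine Matrix.PosSemidef.of_dotProduct_mulVec_nonneg (star_outer a) fun x => ?_
  rw [dot_outer]
  exact star_mul_self_nonneg _

lemma posSemidef_smul_real {M : Matrix ι ι ℂ} (hM : M.PosSemidef) {c : ℝ} (hc : 0 ≤ c) :
    ((c : ℂ) • M).PosSemidef := by
  refine Matrix.PosSemidef.of_dotProduct_mulVec_nonneg ?_ fun x => ?_
  · unfold Matrix.IsHermitian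
    rw [conjTranspose_smul, hM.1]
    simp [Complex.star_def]
  · rw [smul_mulVec, dotProduct_smul]
    exact smul_nonneg (by exact_mod_cast Complex.zero_le_real.mpr hc) (hM.dotProduct_mulVec_nonneg x)

lemma posSemidef_sum {s : Finset κ} {f : κ → Matrix ι ι ℂ}
    (h : ∀ i ∈ s, (f i).PosSemidef) : (∑ i ∈ s, f i).PosSemidef := by
  classical
  induction s using Finset.induction_on with
  | empty => simpa using Matrix.PosSemidef.zero
  | insert _ _ hni ih =>
    rw [Finset.sum_insert hni]
    exact ((h _ (Finset.mem_insert_self _ _)).add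
      (ih fun i hi => h i (Finset.mem_insert_of_mem hi)))


lemma conjTranspose_kron (A : Matrix ι ι ℂ) (B : Matrix κ κ ℂ) :
    (A ⊗ₖ B)ᴴ = Aᴴ ⊗ₖ Bᴴ := by
  ext p q
  simp [kroneckerMap_apply, conjTranspose_apply, mul_comm]

open scoped MatrixOrder in
lemma psd_factor {A : Matrix ι ι ℂ} (hA : A.PosSemidef) :
    ∃ B : Matrix ι ι ℂ, A = Bᴴ * B := by
  obtain ⟨B, rfl⟩ := CStarAlgebra.nonneg_iff_eq_star_mul_self.mp hA.nonneg
  exact ⟨B, rfl⟩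

lemma posSemidef_kron {A : Matrix ι ι ℂ} {B : Matrix κ κ ℂ}
    (hA : A.PosSemidef) (hB : B.PosSemidef) : (A ⊗ₖ B).PosSemidef := by
  obtain ⟨A1, hA1⟩ := psd_factor hA
  obtain ⟨B1, hB1⟩ := psd_factor hB
  rw [hA1, hB1, Matrix.mul_kronecker_mul, ← conjTranspose_kron]
  exact posSemidef_conjTranspose_mul_self _

lemma outer_mul_outer (a b : ι → ℂ) :
    vecMulVec a (star a) * vecMulVec b (star b) =
      (star a ⬝ᵥ b) • vecMulVec a (star b) := by
  ext i j
  simp only [mul_apply, vecMulVec_apply, Matrix.smul_apply, smul_eq_mul, Pi.star_apply,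
    dotProduct, Finset.sum_mul, Finset.mul_sum]
  refine Finset.sum_congr rfl fun k _ => by ring

lemma trace_psd_nonneg {M : Matrix ι ι ℂ} (hM : M.PosSemidef) : 0 ≤ M.trace := by
  have : ∀ i : ι, 0 ≤ M i i := fun i => by
    have := hM.dotProduct_mulVec_nonneg (Pi.single i 1)
    simpa [dotProduct, mulVec, Pi.single_apply] using this
  exact Finset.sum_nonneg fun i _ => this i

lemma trace_mul_psd_nonneg {A B : Matrix ι ι ℂ} (hA : A.PosSemidef) (hB : B.PosSemidef) :
    0 ≤ (A * B).trace := by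
  obtain ⟨C, hC⟩ := psd_factor hA
  rw [hC, ← Matrix.trace_mul_cycle]
  exact trace_psd_nonneg (hB.mul_mul_conjTranspose_same C)

lemma dot_as_trace (B : Matrix ι ι ℂ) (a : ι → ℂ) :
    star a ⬝ᵥ (B *ᵥ a) = (B * vecMulVec a (star a)).trace := by
  simp only [dotProduct, mulVec, trace, diag_apply, mul_apply, vecMulVec_apply,
    Pi.star_apply, dotProduct]
  refine Finset.sum_congr rfl fun i _ => ?_
  rw [Finset.mul_sum]
  exact Finset.sum_congr rfl fun j _ => by ring



lemma sum_mulVec' {s : Finset κ} (M : κ → Matrix ι ι ℂ) (x : ι → ℂ) :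
    (∑ j ∈ s, M j) *ᵥ x = ∑ j ∈ s, M j *ᵥ x := by
  ext i
  simp [mulVec, dotProduct, Matrix.sum_apply, Finset.sum_mul]
  rw [Finset.sum_comm]

lemma dotProduct_sum' {s : Finset κ} (v : ι → ℂ) (u : κ → ι → ℂ) :
    v ⬝ᵥ (∑ j ∈ s, u j) = ∑ j ∈ s, v ⬝ᵥ u j := by
  simp [dotProduct, Finset.mul_sum]
  rw [Finset.sum_comm]

lemma posSemidef_cs {N : ℕ} (f : Fin N → ι → ℂ) :
    ((N : ℂ) • ∑ j, vecMulVec (f j) (star (f j)) -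
      vecMulVec (∑ j, f j) (star (∑ j, f j))).PosSemidef := by
  refine Matrix.PosSemidef.of_dotProduct_mulVec_nonneg ?_ ?_
  · unfold Matrix.IsHermitian
    rw [conjTranspose_sub, conjTranspose_smul, conjTranspose_sum, star_outer]
    simp_rw [star_outer]
    simp
  · intro x
    rw [sub_mulVec, dotProduct_sub, smul_mulVec, dotProduct_smul,
      sum_mulVec', dotProduct_sum', dot_outer]
    simp_rw [dot_outer]
    set c : Fin N → ℂ := fun j => star (f j) ⬝ᵥ x with hc
    have hsum : star (∑ j, f j) ⬝ᵥ x = ∑ j, c j := by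
      simp [c, dotProduct, Finset.sum_apply, Finset.sum_mul]
      rw [Finset.sum_comm]
    rw [hsum]
    rw [sub_nonneg]
    have h1 : ∀ z : ℂ, star z * z = ((‖z‖ : ℝ) ^ 2 : ℝ) := by
      intro z
      rw [← Complex.normSq_eq_norm_sq]
      rw [Complex.star_def, Complex.normSq_eq_conj_mul_self]
    simp_rw [h1]
    rw [smul_eq_mul, ← Complex.ofReal_natCast, ← Complex.ofReal_sum, ← Complex.ofReal_mul]
    rw [Complex.real_le_real]
    calc ‖∑ j, c j‖ ^ 2 ≤ (∑ j, ‖c j‖) ^ 2 := by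
          have h2 := norm_sum_le Finset.univ c
          exact pow_le_pow_left₀ (norm_nonneg _) h2 2
      _ ≤ (N : ℝ) * ∑ j, ‖c j‖ ^ 2 := by
          have := sq_sum_le_card_mul_sum_sq (s := (Finset.univ : Finset (Fin N)))
            (f := fun j => ‖c j‖)
          simpa using this
end CtrlAux

namespace CtrlAux
open Matrix
set_option linter.unusedSectionVars false

lemma conj_std {ι κ : Type} [Fintype ι] [DecidableEq ι] [Fintype κ]
    (W : Matrix κ ι ℂ) (i j : ι) (k l : κ) :
    (W * Matrix.single i j (1 : ℂ) * Wᴴ) k l = W k i * star (W l j) := by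
  simp only [Matrix.mul_apply, Matrix.single, Matrix.of_apply,
    Matrix.conjTranspose_apply, mul_ite, mul_one, mul_zero, ite_and, ite_mul, zero_mul,
    Finset.sum_ite_eq, Finset.mem_univ, if_true, Finset.sum_ite_eq']

lemma choiMatrix_conjMap {ι κ : Type} [Fintype ι] [DecidableEq ι] [Fintype κ]
    (W : Matrix κ ι ℂ) :
    choiMatrix (conjMap W) = vecMulVec (vecRect W) (star (vecRect W)) := by
  ext p q
  simp only [choiMatrix, conjMap, Matrix.of_apply, LinearMap.coe_mk, AddHom.coe_mk,
    vecMulVec_apply, Pi.star_apply, vecRect]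
  exact conj_std W p.1 q.1 p.2 q.2

end CtrlAux

namespace CtrlAux
open Matrix
set_option linter.unusedSectionVars false
set_option maxHeartbeats 1000000

variable {n m : ℕ}

/-- Vectorization of `U j`. -/
def uv (U : Fin n → Mat (Fin m)) (j : Fin n) : Fin m × Fin m → ℂ := vecRect (U j)

/-- Vectorization of the controlled unitary, reindexed. -/
def wv (U : Fin n → Mat (Fin m)) : (Fin n × Fin n) × (Fin m × Fin m) → ℂ :=
  fun p => ctrlU U (p.1.2, p.2.2) (p.1.1, p.2.1)

/-- The `j`-th piece of `wv`. -/
def wj (U : Fin n → Mat (Fin m)) (j : Fin n) : (Fin n × Fin n) × (Fin m × Fin m) → ℂ :=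
  fun p => (if p.1 = (j, j) then 1 else 0) * uv U j p.2

lemma wv_eq_sum (U : Fin n → Mat (Fin m)) : wv U = ∑ j, wj U j := by
  funext p
  obtain ⟨⟨a, b⟩, p2⟩ := p
  simp only [wv, wj, ctrlU, uv, vecRect, Matrix.of_apply, Finset.sum_apply]
  rw [Finset.sum_eq_single b (fun j _ hj => by simp [Prod.ext_iff, Ne.symm hj]) (by simp)]
  simp [Prod.ext_iff, eq_comm]

lemma uv_dot (U : Fin n → Mat (Fin m)) (i j : Fin n) :
    star (uv U i) ⬝ᵥ uv U j = ((U i)ᴴ * U j).trace := by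
  simp only [dotProduct, uv, vecRect, Pi.star_apply, Matrix.trace, Matrix.diag_apply,
    Matrix.mul_apply, Matrix.conjTranspose_apply, Fintype.sum_prod_type]

lemma conjT_mul_self (U : Fin n → Mat (Fin m))
    (hU : ∀ j, U j ∈ Matrix.unitaryGroup (Fin m) ℂ) (j : Fin n) :
    (U j)ᴴ * U j = 1 := by
  have := (Unitary.mem_iff.mp (hU j)).1
  simpa [Matrix.star_eq_conjTranspose] using this

lemma uv_norm (U : Fin n → Mat (Fin m))
    (hU : ∀ j, U j ∈ Matrix.unitaryGroup (Fin m) ℂ) (j : Fin n) :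
    star (uv U j) ⬝ᵥ uv U j = (m : ℂ) := by
  rw [uv_dot, conjT_mul_self U hU j]
  simp [Matrix.trace_one]

/-- The mixture-of-unitaries channel. -/
noncomputable def Qmap (U : Fin n → Mat (Fin m)) : Mat (Fin m) →ₗ[ℂ] Mat (Fin m) :=
  ((n : ℂ))⁻¹ • ∑ j, conjMap (U j)

lemma choiMatrix_Qmap (U : Fin n → Mat (Fin m)) :
    choiMatrix (Qmap U) =
      ((n : ℂ))⁻¹ • ∑ j, vecMulVec (uv U j) (star (uv U j)) := by
  ext p q
  simp only [choiMatrix, Qmap, Matrix.of_apply, LinearMap.smul_apply, LinearMap.sum_apply,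
    Matrix.smul_apply, Matrix.sum_apply, smul_eq_mul]
  congr 1
  refine Finset.sum_congr rfl fun j _ => ?_
  have := conj_std (U j) p.1 q.1 p.2 q.2
  simpa [conjMap, vecMulVec_apply, uv, vecRect] using this

lemma isChannel_Qmap [NeZero n] (U : Fin n → Mat (Fin m))
    (hU : ∀ j, U j ∈ Matrix.unitaryGroup (Fin m) ℂ) : IsChannel (Qmap U) := by
  constructor
  · rw [choiMatrix_Qmap]
    have h1 : ((n : ℂ))⁻¹ = (((n : ℝ)⁻¹ : ℝ) : ℂ) := by push_cast; ring
    rw [h1]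
    exact posSemidef_smul_real
      (posSemidef_sum fun j _ => posSemidef_outer _) (by positivity)
  · intro X
    have hterm : ∀ j : Fin n, (U j * X * (U j)ᴴ).trace = X.trace := by
      intro j
      rw [Matrix.trace_mul_cycle, conjT_mul_self U hU j, Matrix.one_mul]
    simp only [Qmap, LinearMap.smul_apply, LinearMap.sum_apply, conjMap, LinearMap.coe_mk,
      AddHom.coe_mk, Matrix.trace_smul, Matrix.trace_sum]
    simp only [hterm, Finset.sum_const, Finset.card_univ, Fintype.card_fin, smul_eq_mul,
      nsmul_eq_mul]
    rw [← mul_assoc, inv_mul_cancel₀ (by exact_mod_cast (NeZero.ne n)), one_mul]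

lemma rho_eq [NeZero n] [NeZero m] (U : Fin n → Mat (Fin m)) :
    biChoiState (conjMap (ctrlU U)) =
      (((n * m : ℕ) : ℂ))⁻¹ • vecMulVec (wv U) (star (wv U)) := by
  ext p q
  simp only [biChoiState, choiState, choiMatrix, Matrix.of_apply, Matrix.smul_apply,
    vecMulVec_apply, Pi.star_apply, smul_eq_mul]
  rw [show (Fintype.card (Fin n × Fin m)) = n * m by simp]
  congr 1
  have := conj_std (ctrlU U) (p.1.1, p.2.1) (q.1.1, q.2.1) (p.1.2, p.2.2) (q.1.2, q.2.2)
  simpa [conjMap, wv] using this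

end CtrlAux

namespace CtrlAux
open Matrix
open scoped Kronecker ComplexOrder
set_option linter.unusedSectionVars false
set_option maxHeartbeats 1000000

variable {n m : ℕ}

/-- Diagonal complement of the projector onto `(j,j)`. -/
def Dj (n : ℕ) (j : Fin n) : Mat (Fin n × Fin n) :=
  Matrix.diagonal (fun a => if a = (j, j) then 0 else 1)

lemma kron_sum_right {ι κ₂ : Type} [Fintype ι] {s : Finset κ₂} (A : Mat ι) {κ : Type}
    (B : κ₂ → Mat κ) : A ⊗ₖ (∑ j ∈ s, B j) = ∑ j ∈ s, A ⊗ₖ B j := by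
  ext p q
  simp [kroneckerMap_apply, Matrix.sum_apply, Finset.mul_sum]

lemma one_decomp (j : Fin n) :
    (1 : Mat (Fin n × Fin n)) = Dj n j + Matrix.single (j, j) (j, j) (1 : ℂ) := by
  ext a b
  by_cases hab : a = b
  · subst hab
    by_cases h : a = (j, j) <;>
      simp [Dj, Matrix.one_apply, Matrix.single, h, Matrix.diagonal_apply, eq_comm]
  · simp [Dj, Matrix.one_apply, hab, Matrix.single, Matrix.diagonal_apply]
    intro h1 h2
    exact hab (h1.symm.trans h2)

lemma std_kron_outer (U : Fin n → Mat (Fin m)) (j : Fin n) :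
    Matrix.single (j, j) (j, j) (1 : ℂ) ⊗ₖ vecMulVec (uv U j) (star (uv U j)) =
      vecMulVec (wj U j) (star (wj U j)) := by
  ext p q
  simp only [kroneckerMap_apply, Matrix.single, vecMulVec_apply, wj, Pi.star_apply,
    Matrix.of_apply]
  by_cases h1 : p.1 = (j, j) <;> by_cases h2 : q.1 = (j, j) <;>
    simp [h1, h2, eq_comm] <;> ring

lemma dj_psd (j : Fin n) : (Dj n j).PosSemidef := by
  refine Matrix.PosSemidef.diagonal fun a => ?_
  by_cases h : a = (j, j) <;> simp [h]

/-- The key splitting identity for the upper bound. -/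
lemma split_eq [NeZero n] [NeZero m] (U : Fin n → Mat (Fin m)) :
    (((n : ℝ) : ℂ)) • ((1 : Mat (Fin n × Fin n)) ⊗ₖ choiState (Qmap U)) =
      (((n * m : ℕ) : ℂ))⁻¹ •
        (((n : ℂ) • ∑ j, (Dj n j ⊗ₖ vecMulVec (uv U j) (star (uv U j)))) +
          ((n : ℂ) • ∑ j, vecMulVec (wj U j) (star (wj U j)))) := by
  have hτ : choiState (Qmap U) =
      ((m : ℂ))⁻¹ • (((n : ℂ))⁻¹ • ∑ j, vecMulVec (uv U j) (star (uv U j))) := by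
    rw [choiState, choiMatrix_Qmap]
    simp
  rw [hτ]
  rw [Matrix.kronecker_smul, Matrix.kronecker_smul, kron_sum_right]
  have hsplit : ∀ j : Fin n, (1 : Mat (Fin n × Fin n)) ⊗ₖ vecMulVec (uv U j) (star (uv U j)) =
      Dj n j ⊗ₖ vecMulVec (uv U j) (star (uv U j)) + vecMulVec (wj U j) (star (wj U j)) := by
    intro j
    rw [← std_kron_outer U j, ← Matrix.add_kronecker, ← one_decomp]
  simp_rw [hsplit, Finset.sum_add_distrib]
  have hn0 : (n : ℂ) ≠ 0 := by exact_mod_cast NeZero.ne n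
  have hm0 : (m : ℂ) ≠ 0 := by exact_mod_cast NeZero.ne m
  match_scalars <;> (push_cast; field_simp)

/-- The matrix in the upper bound is PSD. -/
lemma key_psd [NeZero n] [NeZero m] (U : Fin n → Mat (Fin m)) :
    ((((n : ℝ)) : ℂ) • ((1 : Mat (Fin n × Fin n)) ⊗ₖ choiState (Qmap U)) -
      biChoiState (conjMap (ctrlU U))).PosSemidef := by
  rw [split_eq U, rho_eq U, wv_eq_sum U, ← smul_sub]
  have hc : (((n * m : ℕ) : ℂ))⁻¹ = ((((n * m : ℕ) : ℝ))⁻¹ : ℝ) := by push_cast; ring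
  rw [hc]
  refine posSemidef_smul_real ?_ (by positivity)
  rw [add_sub_assoc]
  refine Matrix.PosSemidef.add ?_ ?_
  · have hn : (n : ℂ) = (((n : ℝ) : ℝ) : ℂ) := by push_cast; ring
    rw [hn]
    exact posSemidef_smul_real
      (posSemidef_sum fun j _ => posSemidef_kron (dj_psd j) (posSemidef_outer _))
      (by positivity)
  · simpa using posSemidef_cs (fun j => wj U j)

end CtrlAux

namespace CtrlAux
open Matrix
open scoped Kronecker ComplexOrder
set_option linter.unusedSectionVars false
set_option maxHeartbeats 1000000

variable {n m : ℕ}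

lemma mulVec_sum' {ι κ : Type} [Fintype ι] {s : Finset κ} (M : Matrix ι ι ℂ)
    (v : κ → ι → ℂ) : M *ᵥ (∑ j ∈ s, v j) = ∑ j ∈ s, M *ᵥ v j := by
  ext i
  simp [mulVec, dotProduct, Finset.sum_apply, Finset.mul_sum]
  rw [Finset.sum_comm]

lemma sum_dotProduct' {ι κ : Type} [Fintype ι] {s : Finset κ} (v : κ → ι → ℂ)
    (u : ι → ℂ) : (∑ j ∈ s, v j) ⬝ᵥ u = ∑ j ∈ s, v j ⬝ᵥ u := by
  simp [dotProduct, Finset.sum_apply, Finset.sum_mul]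
  rw [Finset.sum_comm]

lemma kron_mulVec {ι κ : Type} [Fintype ι] [Fintype κ] (A : Mat ι) (B : Mat κ)
    (x : ι → ℂ) (y : κ → ℂ) :
    (A ⊗ₖ B) *ᵥ (fun p => x p.1 * y p.2) =
      fun p => (A *ᵥ x) p.1 * (B *ᵥ y) p.2 := by
  funext p
  simp only [mulVec, dotProduct, kroneckerMap_apply, Fintype.sum_prod_type]
  rw [Finset.sum_mul_sum]
  refine Finset.sum_congr rfl fun i _ => Finset.sum_congr rfl fun k _ => by ring

lemma dot_prod_vec {ι κ : Type} [Fintype ι] [Fintype κ] (x x' : ι → ℂ) (y y' : κ → ℂ) :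
    (fun p : ι × κ => x p.1 * y p.2) ⬝ᵥ (fun p => x' p.1 * y' p.2) =
      (x ⬝ᵥ x') * (y ⬝ᵥ y') := by
  simp only [dotProduct, Fintype.sum_prod_type]
  rw [Finset.sum_mul_sum]
  refine Finset.sum_congr rfl fun i _ => Finset.sum_congr rfl fun k _ => by ring

/-- The control basis vector. -/
def ev (n : ℕ) (j : Fin n) : Fin n × Fin n → ℂ := fun a => if a = (j, j) then 1 else 0

lemma wj_eq_prod (U : Fin n → Mat (Fin m)) (j : Fin n) :
    wj U j = fun p => ev n j p.1 * uv U j p.2 := rfl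

lemma star_wj (U : Fin n → Mat (Fin m)) (j : Fin n) :
    star (wj U j) = fun p => ev n j p.1 * star (uv U j) p.2 := by
  funext p
  simp only [Pi.star_apply, wj, ev, star_mul']
  by_cases h : p.1 = (j, j) <;> simp [h, mul_comm]

lemma ev_dot (j k : Fin n) : ev n j ⬝ᵥ ev n k = if j = k then 1 else 0 := by
  simp only [dotProduct, ev, mul_ite, mul_one, mul_zero, ite_mul, one_mul, zero_mul]
  by_cases h : j = k
  · subst h
    simp [Finset.sum_ite_eq']
  · rw [Finset.sum_eq_zero, if_neg h]
    intro a _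
    by_cases h1 : a = (j, j) <;> by_cases h2 : a = (k, k) <;>
      simp [h1, h2, Prod.ext_iff] at * <;> tauto

lemma wj_dot_kron (U : Fin n → Mat (Fin m)) (A : Mat (Fin m × Fin m)) (j k : Fin n) :
    star (wj U j) ⬝ᵥ (((1 : Mat (Fin n × Fin n)) ⊗ₖ A) *ᵥ wj U k) =
      (if j = k then 1 else 0) * (star (uv U j) ⬝ᵥ (A *ᵥ uv U k)) := by
  rw [star_wj, wj_eq_prod, kron_mulVec, dot_prod_vec, Matrix.one_mulVec, ev_dot]

lemma qform_kron (U : Fin n → Mat (Fin m)) (A : Mat (Fin m × Fin m)) :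
    star (wv U) ⬝ᵥ (((1 : Mat (Fin n × Fin n)) ⊗ₖ A) *ᵥ wv U) =
      ∑ k, star (uv U k) ⬝ᵥ (A *ᵥ uv U k) := by
  rw [wv_eq_sum, star_sum, mulVec_sum', sum_dotProduct']
  simp_rw [dotProduct_sum', wj_dot_kron]
  simp

lemma wv_norm (U : Fin n → Mat (Fin m))
    (hU : ∀ j, U j ∈ Matrix.unitaryGroup (Fin m) ℂ) :
    star (wv U) ⬝ᵥ wv U = ((n * m : ℕ) : ℂ) := by
  have h := qform_kron U (1 : Mat (Fin m × Fin m))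
  rw [Matrix.one_kronecker_one] at h
  simp_rw [Matrix.one_mulVec] at h
  rw [h]
  simp [uv_norm U hU]

lemma trace_std (i : Fin m) : (Matrix.single i i (1 : ℂ)).trace = 1 := by
  simp [Matrix.trace, Matrix.diag_apply, Matrix.single, Finset.sum_ite_eq]

lemma trace_choiState [NeZero m] {κ : Type} [Fintype κ]
    (Q : Mat (Fin m) →ₗ[ℂ] Mat κ) (hQ : ∀ X : Mat (Fin m), (Q X).trace = X.trace) :
    (choiState Q).trace = 1 := by
  have hterm : ∀ i : Fin m, ∑ k : κ, Q (Matrix.single i i 1) k k = 1 := by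
    intro i
    have := hQ (Matrix.single i i 1)
    rw [trace_std] at this
    simpa [Matrix.trace, Matrix.diag_apply] using this
  simp only [choiState, choiMatrix, Matrix.trace, Matrix.diag_apply, Matrix.smul_apply,
    Matrix.of_apply, smul_eq_mul, Fintype.sum_prod_type, ← Finset.mul_sum]
  rw [Finset.sum_congr rfl fun i _ => hterm i]
  simp [Finset.sum_const, mul_comm]

/-- `m•1 - ∑ outer (uv j)` is PSD when the unitaries are mutually orthogonal. -/
lemma proj_bound (U : Fin n → Mat (Fin m)) [NeZero m]
    (hU : ∀ j, U j ∈ Matrix.unitaryGroup (Fin m) ℂ)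
    (horth : ∀ i j, i ≠ j → ((U i)ᴴ * U j).trace = 0) :
    ((m : ℂ) • (1 : Mat (Fin m × Fin m)) -
      ∑ k, vecMulVec (uv U k) (star (uv U k))).PosSemidef := by
  set S : Mat (Fin m × Fin m) := ∑ k, vecMulVec (uv U k) (star (uv U k)) with hSdef
  set M : Mat (Fin m × Fin m) := (m : ℂ) • (1 : Mat (Fin m × Fin m)) - S with hMdef
  have hSher : Sᴴ = S := by
    rw [hSdef, conjTranspose_sum]
    simp_rw [star_outer]
  have hMher : Mᴴ = M := by
    rw [hMdef, conjTranspose_sub, conjTranspose_smul, conjTranspose_one, hSher]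
    simp [Complex.star_def]
  have hSS : S * S = (m : ℂ) • S := by
    rw [hSdef, Matrix.sum_mul]
    rw [Finset.smul_sum]
    refine Finset.sum_congr rfl fun i _ => ?_
    rw [Matrix.mul_sum]
    rw [Finset.sum_eq_single i]
    · rw [outer_mul_outer, uv_norm U hU]
    · intro j _ hj
      rw [outer_mul_outer, uv_dot, horth i j (Ne.symm hj)]
      simp
    · simp
  have hMM : M * M = (m : ℂ) • M := by
    rw [hMdef]
    simp only [sub_mul, mul_sub, smul_mul_assoc, mul_smul_comm, Matrix.one_mul,
      Matrix.mul_one, hSS]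
    module
  have hM : M = ((((m : ℝ)⁻¹ : ℝ)) : ℂ) • (Mᴴ * M) := by
    rw [hMher, hMM]
    rw [smul_smul]
    have : (((m : ℝ)⁻¹ : ℝ) : ℂ) * (m : ℂ) = 1 := by
      push_cast
      field_simp
      exact div_self (Nat.cast_ne_zero.mpr (NeZero.ne m))
    rw [this, one_smul]
  rw [hM]
  exact posSemidef_smul_real (posSemidef_conjTranspose_mul_self M) (by positivity)

end CtrlAux

namespace CtrlAux
open Matrix
open scoped Kronecker ComplexOrder
set_option linter.unusedSectionVars false
set_option maxHeartbeats 1000000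

variable {n m : ℕ}

lemma lower_bound [NeZero n] [NeZero m] (U : Fin n → Mat (Fin m))
    (hU : ∀ j, U j ∈ Matrix.unitaryGroup (Fin m) ℂ)
    (horth : ∀ i j, i ≠ j → ((U i)ᴴ * U j).trace = 0)
    (Q : Mat (Fin m) →ₗ[ℂ] Mat (Fin m)) (hQ : IsChannel Q) {l : ℝ} (hl : 0 ≤ l)
    (hpsd : (((l : ℝ) : ℂ) • ((1 : Mat (Fin n × Fin n)) ⊗ₖ choiState Q) -
      biChoiState (conjMap (ctrlU U))).PosSemidef) :
    (n : ℝ) ≤ l := by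
  have hm0 : (0 : ℝ) < m := by
    have := NeZero.ne m
    positivity
  have hτpsd : (choiState Q).PosSemidef := by
    rw [choiState]
    have h1 : ((Fintype.card (Fin m) : ℂ))⁻¹ = ((((m : ℝ))⁻¹ : ℝ) : ℂ) := by
      push_cast [Fintype.card_fin]
      ring
    rw [h1]
    exact posSemidef_smul_real hQ.1 (by positivity)
  have hτtr : (choiState Q).trace = 1 := trace_choiState Q hQ.2
  have hS := proj_bound U hU horth
  have hTtr : (∑ k, star (uv U k) ⬝ᵥ (choiState Q *ᵥ uv U k)) =
      (choiState Q * ∑ k, vecMulVec (uv U k) (star (uv U k))).trace := by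
    rw [Matrix.mul_sum, Matrix.trace_sum]
    exact Finset.sum_congr rfl fun k _ => dot_as_trace (choiState Q) (uv U k)
  have hT : (∑ k, star (uv U k) ⬝ᵥ (choiState Q *ᵥ uv U k)) ≤ (m : ℂ) := by
    rw [hTtr]
    have h1 := trace_mul_psd_nonneg hτpsd hS
    have h2 : (choiState Q * ((m : ℂ) • (1 : Mat (Fin m × Fin m)) -
        ∑ k, vecMulVec (uv U k) (star (uv U k)))).trace =
        (m : ℂ) - (choiState Q * ∑ k, vecMulVec (uv U k) (star (uv U k))).trace := by
      rw [Matrix.mul_sub, Matrix.trace_sub, mul_smul_comm, Matrix.mul_one,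
        Matrix.trace_smul, hτtr]
      simp
    rw [h2] at h1
    exact sub_nonneg.mp h1
  have h0 := hpsd.dotProduct_mulVec_nonneg (wv U)
  rw [sub_mulVec, dotProduct_sub, sub_nonneg] at h0
  rw [smul_mulVec, dotProduct_smul] at h0
  rw [rho_eq U, smul_mulVec, dotProduct_smul, dot_outer, wv_norm U hU] at h0
  rw [qform_kron U (choiState Q)] at h0
  have hnm : ((n * m : ℕ) : ℂ) ≠ 0 := by
    have h1 := NeZero.ne n
    have h2 := NeZero.ne m
    simp [Nat.mul_ne_zero, h1, h2]
  have h2 : ((n * m : ℕ) : ℂ) ≤ (l : ℂ) * ∑ k, star (uv U k) ⬝ᵥ (choiState Q *ᵥ uv U k) := by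
    rw [smul_eq_mul, smul_eq_mul, star_natCast] at h0
    have h3 : ((n * m : ℕ) : ℂ)⁻¹ * (((n * m : ℕ) : ℂ) * ((n * m : ℕ) : ℂ)) =
        ((n * m : ℕ) : ℂ) := by
      field_simp
    rwa [h3] at h0
  have h4 : (l : ℂ) * (∑ k, star (uv U k) ⬝ᵥ (choiState Q *ᵥ uv U k)) ≤ (l : ℂ) * (m : ℂ) :=
    mul_le_mul_of_nonneg_left hT (by exact_mod_cast Complex.zero_le_real.mpr hl)
  have h5 : ((n * m : ℝ) : ℂ) ≤ ((l * m : ℝ) : ℂ) := by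
    push_cast
    push_cast at h2
    exact le_trans h2 h4
  rw [Complex.real_le_real] at h5
  exact le_of_mul_le_mul_right (by linarith) hm0

end CtrlAux


/-- For a controlled unitary `C_U = ∑ j, |j⟩⟨j| ⊗ U_j` on `ℂ^n ⊗ ℂ^m`
viewed as a bipartite channel, the conditional channel min-entropy satisfies
`S_∞[A|B]_{C_U} ≥ −2 log n`, with equality when the `U_j` are mutually orthogonal
(`tr(U_iᴴ U_j) = 0` for `i ≠ j`). -/
theorem controlled_unitary_conditional_min_entropy_bound
    {n m : ℕ} [NeZero n] [NeZero m] (U : Fin n → Mat (Fin m))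
    (hU : ∀ j, U j ∈ Matrix.unitaryGroup (Fin m) ℂ) :
    (((-(2 * Real.logb 2 (n : ℝ))) : ℝ) : EReal) ≤ chanCondMin (conjMap (ctrlU U)) ∧
    ((∀ i j, i ≠ j → ((U i)ᴴ * U j).trace = 0) →
      chanCondMin (conjMap (ctrlU U)) = (((-(2 * Real.logb 2 (n : ℝ))) : ℝ) : EReal)) := by
  classical
  set c : ℝ := Real.logb 2 (n : ℝ) with hc
  have hchan := CtrlAux.isChannel_Qmap U hU
  set I : EReal := ⨅ Q : {Q : Mat (Fin m) →ₗ[ℂ] Mat (Fin m) // IsChannel Q},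
      Dmax (biChoiState (conjMap (ctrlU U)))
        ((1 : Mat (Fin n × Fin n)) ⊗ₖ choiState Q.1) with hI
  have hmain : chanCondMin (conjMap (ctrlU U)) = -I - ((c : ℝ) : EReal) := by
    rw [chanCondMin, hI, hc]
    norm_num
  have hle : I ≤ ((c : ℝ) : EReal) := by
    rw [hI]
    refine iInf_le_of_le ⟨CtrlAux.Qmap U, hchan⟩ (sInf_le ?_)
    exact ⟨(n : ℝ), by positivity, CtrlAux.key_psd U, rfl⟩
  have harith : (-(c : EReal)) - ((c : ℝ) : EReal) = ((-(2 * c) : ℝ) : EReal) := by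
    rw [show (-(2 * c) : ℝ) = -c - c from by ring, EReal.coe_sub, EReal.coe_neg]
  constructor
  · rw [hmain, ← harith]
    exact EReal.sub_le_sub (EReal.neg_le_neg_iff.mpr hle) le_rfl
  · intro horth
    have hge : ((c : ℝ) : EReal) ≤ I := by
      rw [hI]
      refine le_iInf fun Q => le_sInf fun x hx => ?_
      obtain ⟨l, hl0, hpsd, rfl⟩ := hx
      have hnl : (n : ℝ) ≤ l :=
        CtrlAux.lower_bound U hU horth Q.1 Q.2 hl0 hpsd
      refine EReal.coe_le_coe_iff.mpr ?_
      rw [hc]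
      have hn0 : (0 : ℝ) < n := by
        have := NeZero.ne n
        positivity
      exact Real.logb_le_logb_of_le (by norm_num) hn0 hnl
    rw [hmain, le_antisymm hle hge, harith]
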